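/- (Cluster decomposition) For every integer m ≥ 2, the cross constellation X_m equals the set {2^{m−1}·t + s : t ∈ X₁, s ∈ Q_{m−1}}, and this representation is unique: the map (t,s) ↦ 2^{m−1}t + s is a bijection from X₁ × Q_{m−1} onto X_m. In particular X_m has 3·4^m points. -/

import Mathlib

/-- The uniform `4^n`-ary QAM constellation. -/
def Q (n : ℕ) : Set (ℤ × ℤ) :=
  {p | Odd p.1 ∧ Odd p.2 ∧ |p.1| ≤ 2 ^ n - 1 ∧ |p.2| ≤ 2 ^ n - 1}

/-- The `(3×4^m)`-ary cross constellation. -/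
def X (m : ℕ) : Set (ℤ × ℤ) :=
  {p | Odd p.1 ∧ Odd p.2 ∧ |p.1| ≤ 2 ^ (m + 1) - 1 ∧ |p.2| ≤ 2 ^ (m + 1) - 1 ∧
    ¬((2 : ℤ) ^ m < |p.1| ∧ (2 : ℤ) ^ m < |p.2|)}

noncomputable def Gfin (k : ℕ) : Finset ℤ := (Finset.Ico (-(2^k : ℤ)) (2^k)).image (fun j => 2*j+1)

lemma mem_Gfin (k : ℕ) (x : ℤ) : x ∈ Gfin k ↔ Odd x ∧ |x| ≤ 2^(k+1) - 1 := by
  have hK : (2:ℤ)^(k+1) = 2*2^k := by rw [pow_succ]; ring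
  simp only [Gfin, Finset.mem_image, Finset.mem_Ico]
  constructor
  · rintro ⟨j, ⟨hj1, hj2⟩, rfl⟩
    exact ⟨⟨j, by ring⟩, by rw [abs_le]; omega⟩
  · rintro ⟨⟨a, ha⟩, hb⟩
    rw [abs_le] at hb
    exact ⟨a, by omega, by omega⟩

lemma card_Gfin (k : ℕ) : (Gfin k).card = 2^(k+1) := by
  rw [Gfin, Finset.card_image_of_injective _ (fun a b h => by omega), Int.card_Ico]
  have : (2:ℤ)^k - -(2^k) = (2^(k+1) : ℕ) := by push_cast [pow_succ]; ring
  rw [this, Int.toNat_natCast]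

def F1 : Finset (ℤ × ℤ) :=
  {(-3,-1),(-3,1),(-1,-3),(-1,-1),(-1,1),(-1,3),(1,-3),(1,-1),(1,1),(1,3),(3,-1),(3,1)}

/-- decomposition lemma for a single coordinate -/
lemma exists_ts (k : ℕ) (x : ℤ) (hx : Odd x) :
    ∃ t s : ℤ, Odd t ∧ Odd s ∧ |s| ≤ 2^(k+1) - 1 ∧ x = 2^(k+1) * t + s := by
  obtain ⟨a, ha⟩ := hx
  have hc1 : (0:ℤ) < 2^k := by positivity
  have hK : (2:ℤ)^(k+1) = 2*2^k := by rw [pow_succ]; ring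
  have hM : (2:ℤ)^(k+2) = 4*2^k := by rw [pow_succ, pow_succ]; ring
  set q := (x-1) / 2^(k+2) with hq
  set e := (x-1) % 2^(k+2) with he
  have h0 : 0 ≤ e := Int.emod_nonneg _ (by positivity)
  have h1 : e < 2^(k+2) := Int.emod_lt_of_pos _ (by positivity)
  have h2 : 2^(k+2) * q + e = x - 1 := Int.mul_ediv_add_emod _ _
  rw [hM] at h1 h2
  refine ⟨2*q+1, e + 1 - 2*2^k, ⟨q, by ring⟩, ⟨a - 2*(2^k*q) - 2^k, by linear_combination h2 + ha⟩, ?_, ?_⟩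
  · rw [abs_le, hK]
    have hpar : e + 1 - 2*2^k = 2*(a - 2*(2^k*q) - 2^k) + 1 := by linear_combination h2 + ha
    omega
  · rw [hK]; linear_combination -h2

lemma two_pow_abs (K : ℕ) (t : ℤ) : |2^K * t| = 2^K * |t| := by
  rw [abs_mul, abs_pow, abs_two]

lemma uniq_ts (K : ℕ) {t s t' s' : ℤ} (ht : Odd t) (ht' : Odd t')
    (hs : |s| ≤ 2^K - 1) (hs' : |s'| ≤ 2^K - 1)
    (h : 2^K*t + s = 2^K*t' + s') : t = t' ∧ s = s' := by
  have hP : (0:ℤ) < 2^K := by positivity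
  have hteq : t = t' := by
    by_contra hne
    obtain ⟨a, ha⟩ := ht; obtain ⟨b, hb⟩ := ht'
    have h2 : 2 ≤ |t - t'| := by
      rcases abs_cases (t - t') with ⟨hh,_⟩|⟨hh,_⟩ <;> omega
    have h4 : 2^K * (t - t') = s' - s := by linear_combination h
    have h5 : |s' - s| ≤ |s'| + |s| := by
      calc |s' - s| = |s' + -s| := by rw [sub_eq_add_neg]
        _ ≤ |s'| + |-s| := abs_add_le _ _
        _ = |s'| + |s| := by rw [abs_neg]
    have h6 : 2^K * 2 ≤ 2^K * |t - t'| := mul_le_mul_of_nonneg_left h2 (le_of_lt hP)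
    rw [← two_pow_abs, h4] at h6
    linarith
  refine ⟨hteq, ?_⟩
  subst hteq
  linarith [h]

lemma bound_sum (K : ℕ) {t s : ℤ} {b : ℤ} (ht : |t| ≤ b) (hs : |s| ≤ 2^K - 1) :
    |2^K * t + s| ≤ 2^K * b + 2^K - 1 := by
  calc |2^K*t+s| ≤ |2^K*t| + |s| := abs_add_le _ _
    _ = 2^K*|t| + |s| := by rw [two_pow_abs]
    _ ≤ 2^K*b + (2^K-1) := by
        have h := mul_le_mul_of_nonneg_left ht (by positivity : (0:ℤ) ≤ 2^K); linarith
    _ = 2^K*b + 2^K - 1 := by ring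

lemma abs_lower (K : ℕ) (t s : ℤ) : 2^K * |t| - |s| ≤ |2^K*t + s| := by
  have h1 : |2^K*t| ≤ |2^K*t+s| + |s| := by
    calc |2^K*t| = |(2^K*t+s) + -s| := by congr 1; ring
      _ ≤ |2^K*t+s| + |-s| := abs_add_le _ _
      _ = |2^K*t+s| + |s| := by rw [abs_neg]
  rw [two_pow_abs] at h1
  linarith

lemma bound_lower (K : ℕ) {t s : ℤ} (ht : 3 ≤ |t|) (hs : |s| ≤ 2^K - 1) :
    2^(K+1) < |2^K*t+s| := by
  have h1 := abs_lower K t s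
  have h2 : 2^K*3 ≤ 2^K*|t| := mul_le_mul_of_nonneg_left ht (by positivity)
  have h3 : (2:ℤ)^(K+1) = 2^K*2 := pow_succ 2 K
  have h4 : (0:ℤ) < 2^K := by positivity
  linarith

lemma t_le_three (K : ℕ) {t s : ℤ} (ht : Odd t) (hs : |s| ≤ 2^K-1)
    (hb : |2^K*t+s| ≤ 2^(K+2)-1) : |t| ≤ 3 := by
  have h1 := abs_lower K t s
  have hM : (2:ℤ)^(K+2) = 4*2^K := by rw [pow_succ, pow_succ]; ring
  have h4 : (0:ℤ) < 2^K := by positivity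
  have h5 : 2^K * |t| < 2^K * 5 := by nlinarith
  have h6 : |t| < 5 := lt_of_mul_lt_mul_left h5 (le_of_lt h4)
  obtain ⟨a, ha⟩ := ht
  rw [abs_lt] at h6; rw [abs_le]; omega

lemma t_le_one {t : ℤ} (ht : Odd t) (h : ¬ (2 < |t|)) : |t| ≤ 1 := by
  obtain ⟨a, ha⟩ := ht
  push_neg at h
  rw [abs_le] at h ⊢; omega

lemma three_le_t (K : ℕ) {t s : ℤ} (ht : Odd t) (hs : |s| ≤ 2^K-1)
    (h : 2^(K+1) < |2^K*t+s|) : 3 ≤ |t| := by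
  by_contra hc
  push_neg at hc
  have h1 : |t| ≤ 1 := t_le_one ht (by omega)
  have h2 := bound_sum K h1 hs
  have h3 : (2:ℤ)^(K+1) = 2^K*2 := pow_succ 2 K
  linarith

lemma card_F1 : F1.card = 12 := by decide

set_option maxHeartbeats 1000000 in
lemma X1_eq : X 1 = ↑F1 := by
  ext ⟨x, y⟩
  simp only [X, Set.mem_setOf_eq, F1, Finset.coe_insert, Set.mem_insert_iff,
    Finset.coe_singleton, Set.mem_singleton_iff, Prod.mk.injEq]
  norm_num
  constructor
  · rintro ⟨⟨a, ha⟩, ⟨b, hb⟩, hx, hy, hc⟩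
    rw [abs_le] at hx hy
    rcases le_or_gt (|x|) 2 with hc'|hc'
    · rw [abs_le] at hc'; omega
    · have hy2 := hc hc'; rw [abs_le] at hy2; omega
  · rintro h
    have hx1 : x = -3 ∨ x = -1 ∨ x = 1 ∨ x = 3 := by omega
    have hy1 : y = -3 ∨ y = -1 ∨ y = 1 ∨ y = 3 := by omega
    have hxy : (x = -3 ∨ x = 3) → (y = -1 ∨ y = 1) := by omega
    refine ⟨?_, ?_, by rw [abs_le]; omega, by rw [abs_le]; omega, ?_⟩
    · rcases hx1 with rfl|rfl|rfl|rfl; exacts [⟨-2, by ring⟩, ⟨-1, by ring⟩, ⟨0, by ring⟩, ⟨1, by ring⟩]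
    · rcases hy1 with rfl|rfl|rfl|rfl; exacts [⟨-2, by ring⟩, ⟨-1, by ring⟩, ⟨0, by ring⟩, ⟨1, by ring⟩]
    · intro h2
      rw [abs_le]
      rcases abs_cases x with ⟨he,_⟩|⟨he,_⟩ <;> rw [he] at h2 <;> omega

lemma Q_eq (k : ℕ) : Q (k+1) = ↑(Gfin k ×ˢ Gfin k) := by
  ext ⟨x, y⟩
  simp only [Q, Set.mem_setOf_eq, Finset.coe_product, Set.mem_prod, Finset.mem_coe, mem_Gfin]
  tauto

/-- cluster decomposition: for `m ≥ 2`, `X m` equals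
`{2^{m−1}·t + s : t ∈ X 1, s ∈ Q (m−1)}`, the representation is unique
(the map `(t,s) ↦ 2^{m−1}t + s` is a bijection from `X 1 × Q (m−1)` onto `X m`),
and `X m` has `3·4^m` points. -/
theorem cluster_decomposition (m : ℕ) (hm : 2 ≤ m) :
    (X m = {p | ∃ t ∈ X 1, ∃ s ∈ Q (m - 1), p = ((2 : ℤ) ^ (m - 1)) • t + s}) ∧
    (∀ t ∈ X 1, ∀ s ∈ Q (m - 1), ∀ t' ∈ X 1, ∀ s' ∈ Q (m - 1),
      ((2 : ℤ) ^ (m - 1)) • t + s = ((2 : ℤ) ^ (m - 1)) • t' + s' → t = t' ∧ s = s') ∧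
    (X m).ncard = 3 * 4 ^ m := by
  obtain ⟨k, rfl⟩ : ∃ k, m = k + 2 := ⟨m - 2, by omega⟩
  simp only [show k + 2 - 1 = k + 1 from rfl]
  -- Part A
  have hA : X (k+2) = {p | ∃ t ∈ X 1, ∃ s ∈ Q (k+1), p = ((2:ℤ)^(k+1)) • t + s} := by
    ext ⟨x, y⟩
    simp only [X, Q, Set.mem_setOf_eq]
    constructor
    · rintro ⟨hx, hy, hbx, hby, hcross⟩
      obtain ⟨t1, s1, ht1, hs1, hs1b, hx1⟩ := exists_ts k x hx
      obtain ⟨t2, s2, ht2, hs2, hs2b, hy1⟩ := exists_ts k y hy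
      have ht1b : |t1| ≤ 3 := t_le_three (k+1) ht1 hs1b (by rw [← hx1]; exact hbx)
      have ht2b : |t2| ≤ 3 := t_le_three (k+1) ht2 hs2b (by rw [← hy1]; exact hby)
      refine ⟨(t1, t2), ⟨ht1, ht2, by norm_num; exact ht1b, by norm_num; exact ht2b, ?_⟩,
        (s1, s2), ⟨hs1, hs2, hs1b, hs2b⟩, ?_⟩
      · rintro ⟨c1, c2⟩
        norm_num at c1 c2
        have h3a : 3 ≤ |t1| := by omega
        have h3b : 3 ≤ |t2| := by omega
        exact hcross ⟨by rw [hx1]; exact bound_lower (k+1) h3a hs1b,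
          by rw [hy1]; exact bound_lower (k+1) h3b hs2b⟩
      · rw [Prod.smul_mk, Prod.mk_add_mk, smul_eq_mul, smul_eq_mul, Prod.mk.injEq]
        exact ⟨hx1, hy1⟩
    · rintro ⟨⟨t1, t2⟩, ⟨ht1, ht2, ht1b, ht2b, htc⟩, ⟨s1, s2⟩, ⟨hs1, hs2, hs1b, hs2b⟩, heq⟩
      rw [Prod.smul_mk, Prod.mk_add_mk, smul_eq_mul, smul_eq_mul, Prod.mk.injEq] at heq
      obtain ⟨hx1, hy1⟩ := heq
      subst hx1; subst hy1
      have ht1b' : |t1| ≤ 3 := by norm_num at ht1b; exact ht1b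
      have ht2b' : |t2| ≤ 3 := by norm_num at ht2b; exact ht2b
      have hpow : (2:ℤ)^(k+1)*3 + 2^(k+1) - 1 = 2^(k+3) - 1 := by
        rw [pow_succ, pow_succ]; ring
      refine ⟨Even.add_odd ⟨2^k*t1, by rw [pow_succ]; ring⟩ hs1,
        Even.add_odd ⟨2^k*t2, by rw [pow_succ]; ring⟩ hs2,
        by rw [show k+2+1 = k+3 from rfl, ← hpow]; exact bound_sum (k+1) ht1b' hs1b,
        by rw [show k+2+1 = k+3 from rfl, ← hpow]; exact bound_sum (k+1) ht2b' hs2b, ?_⟩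
      rintro ⟨c1, c2⟩
      have h3a : 3 ≤ |t1| := three_le_t (k+1) ht1 hs1b c1
      have h3b : 3 ≤ |t2| := three_le_t (k+1) ht2 hs2b c2
      exact htc ⟨by norm_num; omega, by norm_num; omega⟩
  -- Part B
  have hB : ∀ t ∈ X 1, ∀ s ∈ Q (k+1), ∀ t' ∈ X 1, ∀ s' ∈ Q (k+1),
      ((2:ℤ)^(k+1)) • t + s = ((2:ℤ)^(k+1)) • t' + s' → t = t' ∧ s = s' := by
    rintro ⟨t1, t2⟩ ⟨ht1, ht2, -, -, -⟩ ⟨s1, s2⟩ ⟨hs1, hs2, hs1b, hs2b⟩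
      ⟨t1', t2'⟩ ⟨ht1', ht2', -, -, -⟩ ⟨s1', s2'⟩ ⟨hs1', hs2', hs1b', hs2b'⟩ heq
    rw [Prod.smul_mk, Prod.mk_add_mk, smul_eq_mul, smul_eq_mul, Prod.smul_mk, Prod.mk_add_mk,
      smul_eq_mul, smul_eq_mul, Prod.mk.injEq] at heq
    obtain ⟨h1, h2⟩ := heq
    obtain ⟨e1, e2⟩ := uniq_ts (k+1) ht1 ht1' hs1b hs1b' h1
    obtain ⟨e3, e4⟩ := uniq_ts (k+1) ht2 ht2' hs2b hs2b' h2
    exact ⟨Prod.ext e1 e3, Prod.ext e2 e4⟩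
  refine ⟨hA, hB, ?_⟩
  -- Part C
  have hXF : ∀ t : ℤ × ℤ, t ∈ X 1 ↔ t ∈ F1 := by
    intro t; rw [X1_eq]; exact Iff.rfl
  have hQG : ∀ s : ℤ × ℤ, s ∈ Q (k+1) ↔ s ∈ Gfin k ×ˢ Gfin k := by
    intro s; rw [Q_eq]; exact Iff.rfl
  have himg : X (k+2) =
      ↑((F1 ×ˢ (Gfin k ×ˢ Gfin k)).image (fun q => ((2:ℤ)^(k+1)) • q.1 + q.2)) := by
    rw [hA]
    ext p
    simp only [Finset.coe_image, Set.mem_image, Finset.mem_coe, Finset.mem_product,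
      Set.mem_setOf_eq]
    constructor
    · rintro ⟨t, ht, s, hs, rfl⟩
      exact ⟨(t, s), ⟨(hXF t).mp ht, Finset.mem_product.mp ((hQG s).mp hs)⟩, rfl⟩
    · rintro ⟨⟨t, s⟩, ⟨ht, hs⟩, rfl⟩
      exact ⟨t, (hXF t).mpr ht, s, (hQG s).mpr (Finset.mem_product.mpr hs), rfl⟩
  have hinj : Set.InjOn (fun q : (ℤ×ℤ)×(ℤ×ℤ) => ((2:ℤ)^(k+1)) • q.1 + q.2)
      ↑(F1 ×ˢ (Gfin k ×ˢ Gfin k)) := by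
    rintro ⟨t, s⟩ hq ⟨t', s'⟩ hq' h
    simp only [Finset.coe_product, Set.mem_prod, Finset.mem_coe] at hq hq'
    obtain ⟨e1, e2⟩ := hB t ((hXF t).mpr hq.1) s ((hQG s).mpr (Finset.mem_product.mpr hq.2))
      t' ((hXF t').mpr hq'.1) s' ((hQG s').mpr (Finset.mem_product.mpr hq'.2)) h
    rw [e1, e2]
  calc (X (k+2)).ncard
      = ((F1 ×ˢ (Gfin k ×ˢ Gfin k)).image (fun q => ((2:ℤ)^(k+1)) • q.1 + q.2)).card := by
        rw [himg, Set.ncard_coe_finset]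
    _ = (F1 ×ˢ (Gfin k ×ˢ Gfin k)).card := Finset.card_image_of_injOn hinj
    _ = 12 * (2^(k+1) * 2^(k+1)) := by
        rw [Finset.card_product, Finset.card_product, card_F1, card_Gfin]
    _ = 3 * 4^(k+2) := by rw [show (4:ℕ) = 2*2 from rfl, mul_pow, pow_succ]; ring
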